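/- arXiv:0903.0405 — 11 statements merged into one kernel-verified Lean document; each statement's English description precedes it below -/
import Mathlib

section
/- Let φ : ℝⁿ × ℝᵐ → ℝ be a function of two variables. Suppose that every y ∈ ℝᵐ is a maximizer of φ(x, ·) for some x ∈ ℝⁿ (i.e. for every y there exists x with φ(x, y') ≤ φ(x, y) for all y'), and that every x ∈ ℝⁿ is a maximizer of φ(·, y) for some y ∈ ℝᵐ. Then, with suprema and infima taken in the extended reals, inf_{x ∈ ℝⁿ} sup_{y ∈ ℝᵐ} φ(x, y) = inf_{y ∈ ℝᵐ} sup_{x ∈ ℝⁿ} φ(x, y). -/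
open scoped Matrix

/-- If every `y` is a maximizer of `φ x ·` for some `x`, and every `x` is a
maximizer of `φ · y` for some `y`, then `inf_x sup_y φ(x,y) = inf_y sup_x φ(x,y)`
in the extended reals. -/
theorem minmax_eq_of_argmax_surjective (n m : ℕ)
    (φ : (Fin n → ℝ) → (Fin m → ℝ) → ℝ)
    (hY : ∀ y : Fin m → ℝ, ∃ x : Fin n → ℝ, ∀ y' : Fin m → ℝ, φ x y' ≤ φ x y)
    (hX : ∀ x : Fin n → ℝ, ∃ y : Fin m → ℝ, ∀ x' : Fin n → ℝ, φ x' y ≤ φ x y) :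
    ⨅ x : Fin n → ℝ, ⨆ y : Fin m → ℝ, ((φ x y : ℝ) : EReal)
      = ⨅ y : Fin m → ℝ, ⨆ x : Fin n → ℝ, ((φ x y : ℝ) : EReal) := by
  apply le_antisymm
  · refine le_iInf fun y => ?_
    obtain ⟨x, hx⟩ := hY y
    refine (iInf_le _ x).trans ?_
    refine iSup_le fun y' => ?_
    exact le_trans (by exact_mod_cast hx y') (le_iSup (fun x' => ((φ x' y : ℝ) : EReal)) x)
  · refine le_iInf fun x => ?_
    obtain ⟨y, hy⟩ := hX x
    refine (iInf_le _ y).trans ?_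
    refine iSup_le fun x' => ?_
    exact le_trans (by exact_mod_cast hy x') (le_iSup (fun y' => ((φ x y' : ℝ) : EReal)) y)
end

section
/- Semiconvex biconjugacy: Let P, Q be symmetric n×n real matrices and S an invertible n×n real matrix, and let φ(x, z) = ½xᵀPx + xᵀSz + ½zᵀQz for x, z ∈ ℝⁿ. Let f : ℝⁿ → ℝ be a (finite-valued) function such that x ↦ f(x) − ½xᵀPx is convex on ℝⁿ. Then for every x ∈ ℝⁿ, sup_{z ∈ ℝⁿ} [ φ(x, z) + inf_{y ∈ ℝⁿ} ( f(y) − φ(y, z) ) ] = f(x), where the inner infimum and outer supremum are taken in the extended reals. -/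
open scoped Matrix

lemma exists_subgrad {n : ℕ} (g : (Fin n → ℝ) → ℝ)
    (hg : ConvexOn ℝ Set.univ g) (x : Fin n → ℝ) :
    ∃ w : Fin n → ℝ, ∀ y, g x + (y - x) ⬝ᵥ w ≤ g y := by
  -- continuity
  have hcont : Continuous g := by
    rw [← continuousOn_univ]
    exact hg.continuousOn isOpen_univ
  -- strict epigraph
  set s : Set ((Fin n → ℝ) × ℝ) := {p | g p.1 < p.2} with hs
  have hconv : Convex ℝ s := by
    have := hg.convex_strict_epigraph
    simpa [s, Set.mem_univ] using this
  have hopen : IsOpen s := isOpen_lt (hcont.comp continuous_fst) continuous_snd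
  have hx : (x, g x) ∉ s := by simp [s]
  obtain ⟨ℓ, hℓ⟩ := geometric_hahn_banach_open_point hconv hopen hx
  set a : ℝ := ℓ (0, 1) with ha
  have hkey : ∀ (y : Fin n → ℝ) (t : ℝ), g y < t → ℓ (y, 0) + t * a < ℓ (x, 0) + g x * a := by
    intro y t ht
    have h1 : (y, t) = (y, (0:ℝ)) + t • ((0 : Fin n → ℝ), (1:ℝ)) := by
      simp [Prod.ext_iff]
    have h2 : ((x, g x) : (Fin n → ℝ) × ℝ) = (x, (0:ℝ)) + g x • ((0 : Fin n → ℝ), (1:ℝ)) := by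
      simp [Prod.ext_iff]
    have hlt := hℓ (y, t) ht
    have e1 : ℓ (y, t) = ℓ (y, 0) + t * a := by
      rw [h1, map_add, map_smul, smul_eq_mul]
    have e2 : ℓ ((x, g x) : (Fin n → ℝ) × ℝ) = ℓ (x, 0) + g x * a := by
      rw [h2, map_add, map_smul, smul_eq_mul]
    rw [e1, e2] at hlt
    exact hlt
  have hneg : a < 0 := by
    have := hkey x (g x + 1) (by linarith)
    nlinarith
  have ha0 : a ≠ 0 := ne_of_lt hneg
  have hle : ∀ y : Fin n → ℝ, ℓ (y, 0) + g y * a ≤ ℓ (x, 0) + g x * a := by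
    intro y
    by_contra hcon
    push_neg at hcon
    set ε : ℝ := ℓ (y, 0) + g y * a - (ℓ (x, 0) + g x * a) with hε
    have hε0 : 0 < ε := by linarith
    have hdp : 0 < ε / (2 * (-a)) := div_pos hε0 (by linarith)
    have hda : ε / (2 * (-a)) * a = -(ε / 2) := by
      field_simp
    have := hkey y (g y + ε / (2 * (-a))) (by linarith)
    nlinarith
  -- linear functional as dot product
  set L : (Fin n → ℝ) →L[ℝ] ℝ := ℓ.comp (ContinuousLinearMap.inl ℝ (Fin n → ℝ) ℝ) with hL
  have hLval : ∀ v, ℓ (v, 0) = L v := fun v => rfl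
  have hLsum : ∀ v : Fin n → ℝ, L v = ∑ i, v i * L (Pi.single i 1) := by
    intro v
    have hv : v = ∑ i, v i • (Pi.single i 1 : Fin n → ℝ) := by
      conv_lhs => rw [← Finset.univ_sum_single v]
      refine Finset.sum_congr rfl fun i _ => ?_
      ext j
      by_cases h : j = i <;> simp [Pi.single_apply, h]
    calc L v = L (∑ i, v i • (Pi.single i 1 : Fin n → ℝ)) := by rw [← hv]
    _ = ∑ i, v i * L (Pi.single i 1) := by
        rw [map_sum]; simp [smul_eq_mul]
  refine ⟨fun i => -(L (Pi.single i 1)) / a, fun y => ?_⟩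
  have h1 := hle y
  rw [hLval, hLval] at h1
  have hdot : (y - x) ⬝ᵥ (fun i => -(L (Pi.single i 1)) / a) = (L x - L y) / a := by
    rw [dotProduct, hLsum x, hLsum y, ← Finset.sum_sub_distrib, Finset.sum_div]
    refine Finset.sum_congr rfl fun i _ => ?_
    simp [Pi.sub_apply]
    field_simp
    ring
  rw [hdot]
  rw [← sub_nonneg]
  have : g y - (g x + (L x - L y) / a) = ((L y + g y * a) - (L x + g x * a)) / a := by
    field_simp
    ring
  rw [this]
  exact div_nonneg_iff.mpr (Or.inr ⟨by linarith, hneg.le⟩)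

/-- Semiconvex biconjugacy. For the bivariate quadratic kernel
`φ(x,z) = ½xᵀPx + xᵀSz + ½zᵀQz` with `P, Q` symmetric and `S` invertible, and any
finite-valued `f` such that `x ↦ f x − ½xᵀPx` is convex, the semiconvex dual followed by
the inverse transform recovers `f`:
`sup_z [φ(x,z) + inf_y (f y − φ(y,z))] = f x` (in the extended reals). -/
theorem semiconvex_biconjugacy (n : ℕ) (P S Q : Matrix (Fin n) (Fin n) ℝ)
    (hP : P.IsSymm) (hQ : Q.IsSymm) (hS : IsUnit S)
    (f : (Fin n → ℝ) → ℝ)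
    (hf : ConvexOn ℝ Set.univ (fun x => f x - (1/2 : ℝ) * (x ⬝ᵥ (P *ᵥ x))))
    (φ : (Fin n → ℝ) → (Fin n → ℝ) → ℝ)
    (hφ : ∀ x z, φ x z =
      (1/2 : ℝ) * (x ⬝ᵥ (P *ᵥ x)) + x ⬝ᵥ (S *ᵥ z) + (1/2 : ℝ) * (z ⬝ᵥ (Q *ᵥ z)))
    (x : Fin n → ℝ) :
    ⨆ z : Fin n → ℝ,
        (((φ x z : ℝ) : EReal) + ⨅ y : Fin n → ℝ, ((f y - φ y z : ℝ) : EReal))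
      = ((f x : ℝ) : EReal) := by
  obtain ⟨w, hw⟩ := exists_subgrad _ hf x
  have hdet : IsUnit S.det := (Matrix.isUnit_iff_isUnit_det S).mp hS
  set z₀ := S⁻¹ *ᵥ w with hz0
  have hSz : S *ᵥ z₀ = w := by
    rw [hz0, Matrix.mulVec_mulVec, Matrix.mul_nonsing_inv S hdet, Matrix.one_mulVec]
  apply le_antisymm
  · apply iSup_le
    intro z
    have h1 : (⨅ y : Fin n → ℝ, ((f y - φ y z : ℝ) : EReal)) ≤ ((f x - φ x z : ℝ) : EReal) :=
      iInf_le _ x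
    calc ((φ x z : ℝ) : EReal) + ⨅ y : Fin n → ℝ, ((f y - φ y z : ℝ) : EReal)
        ≤ ((φ x z : ℝ) : EReal) + ((f x - φ x z : ℝ) : EReal) := add_le_add_right h1 _
      _ = ((f x : ℝ) : EReal) := by rw [← EReal.coe_add]; norm_num
  · have h2 : ((f x - φ x z₀ : ℝ) : EReal) ≤ ⨅ y : Fin n → ℝ, ((f y - φ y z₀ : ℝ) : EReal) := by
      apply le_iInf
      intro y
      apply EReal.coe_le_coe_iff.mpr
      have hwy := hw y
      have hyd : (y - x) ⬝ᵥ w = y ⬝ᵥ w - x ⬝ᵥ w := sub_dotProduct y x w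
      rw [hyd] at hwy
      rw [hφ x z₀, hφ y z₀, hSz]
      linarith
    have hterm : ((f x : ℝ) : EReal)
        ≤ ((φ x z₀ : ℝ) : EReal) + ⨅ y : Fin n → ℝ, ((f y - φ y z₀ : ℝ) : EReal) := by
      calc ((f x : ℝ) : EReal) = ((φ x z₀ : ℝ) : EReal) + ((f x - φ x z₀ : ℝ) : EReal) := by
            rw [← EReal.coe_add]; norm_num
        _ ≤ _ := add_le_add_right h2 _
    exact le_iSup_of_le z₀ hterm
end

section
/- Conserved quantity along optimal trajectories: Let A, C, Σ : ℝ → (n×n real matrices) and let P, S, Q : ℝ → (n×n real matrices) be differentiable on an interval I satisfying the bivariate differential Riccati system P'(t) = −(A(t)ᵀP(t) + P(t)A(t) + C(t) + P(t)Σ(t)P(t)), S'(t) = −(A(t) + Σ(t)P(t))ᵀS(t), Q'(t) = −S(t)ᵀΣ(t)S(t) for all t ∈ I. Fix z ∈ ℝⁿ and let x : ℝ → ℝⁿ be differentiable on I with x'(t) = (A(t) + Σ(t)P(t))x(t) + Σ(t)S(t)z. Then the function t ↦ S(t)ᵀx(t) + Q(t)z is constant on I; in particular S(t₂)ᵀx(t₂)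 + Q(t₂)z = S(t₁)ᵀx(t₁) + Q(t₁)z for all t₁, t₂ ∈ I. -/
open scoped Matrix

attribute [local instance] Matrix.normedAddCommGroup Matrix.normedSpace

noncomputable def mvCLM (n : ℕ) : Matrix (Fin n) (Fin n) ℝ →L[ℝ] ((Fin n → ℝ) →L[ℝ] (Fin n → ℝ)) :=
  LinearMap.toContinuousLinearMap
  { toFun := fun M => LinearMap.toContinuousLinearMap (Matrix.mulVecLin M)
    map_add' := by intro M N; ext v; simp [Matrix.add_mulVec]
    map_smul' := by intro c M; ext v; simp [Matrix.smul_mulVec] }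

@[simp] lemma mvCLM_apply (n : ℕ) (M : Matrix (Fin n) (Fin n) ℝ) (v : Fin n → ℝ) :
    mvCLM n M v = M *ᵥ v := rfl

noncomputable def trCLM (n : ℕ) : Matrix (Fin n) (Fin n) ℝ →L[ℝ] Matrix (Fin n) (Fin n) ℝ :=
  LinearMap.toContinuousLinearMap
  { toFun := Matrix.transpose
    map_add' := by intro M N; simp
    map_smul' := by intro c M; simp }

@[simp] lemma trCLM_apply (n : ℕ) (M : Matrix (Fin n) (Fin n) ℝ) : trCLM n M = Mᵀ := rfl

/-- Conserved quantity along optimal trajectories. If `(P, S, Q)` solves the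
bivariate differential Riccati system on an interval `I` and `x` solves the optimal
closed-loop ODE `x' = (A + ΣP)x + ΣSz`, then `t ↦ S(t)ᵀ x(t) + Q(t) z` is constant on
`I`. -/
theorem conserved_quantity_along_optimal_trajectories (n : ℕ)
    (A C Sig P S Q : ℝ → Matrix (Fin n) (Fin n) ℝ)
    (I : Set ℝ) (hI : Convex ℝ I)
    (hP : ∀ t ∈ I, HasDerivWithinAt P
      (-((A t)ᵀ * P t + P t * A t + C t + P t * Sig t * P t)) I t)
    (hS : ∀ t ∈ I, HasDerivWithinAt S (-((A t + Sig t * P t)ᵀ * S t)) I t)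
    (hQ : ∀ t ∈ I, HasDerivWithinAt Q (-((S t)ᵀ * Sig t * S t)) I t)
    (z : Fin n → ℝ) (x : ℝ → Fin n → ℝ)
    (hx : ∀ t ∈ I, HasDerivWithinAt x
      ((A t + Sig t * P t) *ᵥ x t + (Sig t * S t) *ᵥ z) I t)
    (t₁ t₂ : ℝ) (ht₁ : t₁ ∈ I) (ht₂ : t₂ ∈ I) :
    (S t₂)ᵀ *ᵥ x t₂ + Q t₂ *ᵥ z = (S t₁)ᵀ *ᵥ x t₁ + Q t₁ *ᵥ z := by
  set f : ℝ → (Fin n → ℝ) := fun t => (S t)ᵀ *ᵥ x t + Q t *ᵥ z with hf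
  have hderiv : ∀ t ∈ I, HasDerivWithinAt f 0 I t := by
    intro t ht
    have hSt : HasDerivWithinAt (fun t => (S t)ᵀ)
        (-((A t + Sig t * P t)ᵀ * S t))ᵀ I t :=
      (trCLM n).hasFDerivAt.comp_hasDerivWithinAt t (hS t ht)
    have hc : HasDerivWithinAt (fun t => mvCLM n (S t)ᵀ)
        (mvCLM n (-((A t + Sig t * P t)ᵀ * S t))ᵀ) I t :=
      (mvCLM n).hasFDerivAt.comp_hasDerivWithinAt t hSt
    have h1 : HasDerivWithinAt (fun t => (S t)ᵀ *ᵥ x t)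
        (mvCLM n (-((A t + Sig t * P t)ᵀ * S t))ᵀ (x t)
          + (S t)ᵀ *ᵥ ((A t + Sig t * P t) *ᵥ x t + (Sig t * S t) *ᵥ z)) I t :=
      hc.clm_apply (hx t ht)
    have hcQ : HasDerivWithinAt (fun t => mvCLM n (Q t))
        (mvCLM n (-((S t)ᵀ * Sig t * S t))) I t :=
      (mvCLM n).hasFDerivAt.comp_hasDerivWithinAt t (hQ t ht)
    have h2 : HasDerivWithinAt (fun t => Q t *ᵥ z)
        (mvCLM n (-((S t)ᵀ * Sig t * S t)) z + Q t *ᵥ (0 : Fin n → ℝ)) I t :=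
      hcQ.clm_apply (hasDerivWithinAt_const t I z)
    have := h1.add h2
    refine this.congr_deriv (Eq.symm ?_)
    simp only [mvCLM_apply, Matrix.mulVec_zero, add_zero, Matrix.neg_mulVec,
      Matrix.transpose_neg, Matrix.transpose_mul, Matrix.transpose_transpose,
      Matrix.mulVec_add, Matrix.mulVec_mulVec]
    abel_nf
    rw [Matrix.mul_assoc]
    abel
  have key : ∀ s ∈ I, ∀ u ∈ I, ‖f s - f u‖ ≤ 0 * ‖s - u‖ := by
    intro s hs u hu
    exact hI.norm_image_sub_le_of_norm_hasFDerivWithin_le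
      (fun t ht => (hderiv t ht).hasFDerivWithinAt)
      (fun t ht => by simp) hu hs
  have := key t₂ ht₂ t₁ ht₁
  rw [zero_mul] at this
  have : f t₂ - f t₁ = 0 := by
    exact norm_eq_zero.mp (le_antisymm this (norm_nonneg _))
  have := sub_eq_zero.mp this
  simpa [hf] using this
end

section
/- Bivariate quadratic form of the max-plus fundamental kernel: Let P₁, Q₁, P₂, Q₂ be symmetric n×n real matrices and S₁, S₂ arbitrary n×n real matrices, with Q₁ − Q₂ positive definite. Define V₁(x, z) = ½xᵀP₁x + xᵀS₁z + ½zᵀQ₁z and V₂(y, z) = ½yᵀP₂y + yᵀS₂z + ½zᵀQ₂z. Then for all x, y ∈ ℝⁿ, the infimum over z ∈ ℝⁿ of V₁(x, z) − V₂(y, z) equals ½xᵀI₁₁x + xᵀI₁₂y + ½yᵀI₂₂y, where I₁₁ = P₁ − S₁(Q₁ − Q₂)⁻¹S₁ᵀ, I₁₂ = S₁(Q₁ − Q₂)⁻¹S₂ᵀ, I₂₂ = −P₂ − S₂(Q₁ − Q₂)⁻¹S₂ᵀ; moreover the infimum is attained at ẑ = (Q₁ − Q₂)⁻¹(S₂ᵀy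 − S₁ᵀx). -/
open scoped Matrix

section aux

variable {n : ℕ}

lemma symm_dot_swap (M : Matrix (Fin n) (Fin n) ℝ) (hM : M.IsSymm)
    (u v : Fin n → ℝ) : u ⬝ᵥ (M *ᵥ v) = v ⬝ᵥ (M *ᵥ u) := by
  rw [Matrix.dotProduct_mulVec, ← Matrix.mulVec_transpose, hM, dotProduct_comm]

lemma transp_dot (M : Matrix (Fin n) (Fin n) ℝ) (u v : Fin n → ℝ) :
    u ⬝ᵥ (M *ᵥ v) = (Mᵀ *ᵥ u) ⬝ᵥ v := by
  rw [Matrix.dotProduct_mulVec, ← Matrix.mulVec_transpose]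

end aux

/-- Bivariate quadratic form of the max-plus fundamental kernel. With
`Q₁ − Q₂` positive definite, `inf_z [V₁(x,z) − V₂(y,z)] = ½xᵀI₁₁x + xᵀI₁₂y + ½yᵀI₂₂y`
with `I₁₁ = P₁ − S₁(Q₁−Q₂)⁻¹S₁ᵀ`, `I₁₂ = S₁(Q₁−Q₂)⁻¹S₂ᵀ`,
`I₂₂ = −P₂ − S₂(Q₁−Q₂)⁻¹S₂ᵀ`, attained at `ẑ = (Q₁−Q₂)⁻¹(S₂ᵀy − S₁ᵀx)`. -/
theorem maxplus_fundamental_kernel_biquadratic (n : ℕ)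
    (P₁ Q₁ P₂ Q₂ S₁ S₂ : Matrix (Fin n) (Fin n) ℝ)
    (hP₁ : P₁.IsSymm) (hQ₁ : Q₁.IsSymm) (hP₂ : P₂.IsSymm) (hQ₂ : Q₂.IsSymm)
    (hpd : (Q₁ - Q₂).PosDef)
    (V₁ V₂ : (Fin n → ℝ) → (Fin n → ℝ) → ℝ)
    (hV₁ : ∀ x z, V₁ x z =
      (1/2 : ℝ) * (x ⬝ᵥ (P₁ *ᵥ x)) + x ⬝ᵥ (S₁ *ᵥ z) + (1/2 : ℝ) * (z ⬝ᵥ (Q₁ *ᵥ z)))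
    (hV₂ : ∀ y z, V₂ y z =
      (1/2 : ℝ) * (y ⬝ᵥ (P₂ *ᵥ y)) + y ⬝ᵥ (S₂ *ᵥ z) + (1/2 : ℝ) * (z ⬝ᵥ (Q₂ *ᵥ z)))
    (I₁₁ I₁₂ I₂₂ : Matrix (Fin n) (Fin n) ℝ)
    (hI₁₁ : I₁₁ = P₁ - S₁ * (Q₁ - Q₂)⁻¹ * S₁ᵀ)
    (hI₁₂ : I₁₂ = S₁ * (Q₁ - Q₂)⁻¹ * S₂ᵀ)
    (hI₂₂ : I₂₂ = -P₂ - S₂ * (Q₁ - Q₂)⁻¹ * S₂ᵀ)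
    (x y : Fin n → ℝ) :
    (∀ z : Fin n → ℝ,
        (1/2 : ℝ) * (x ⬝ᵥ (I₁₁ *ᵥ x)) + x ⬝ᵥ (I₁₂ *ᵥ y) + (1/2 : ℝ) * (y ⬝ᵥ (I₂₂ *ᵥ y))
          ≤ V₁ x z - V₂ y z) ∧
      V₁ x ((Q₁ - Q₂)⁻¹ *ᵥ (S₂ᵀ *ᵥ y - S₁ᵀ *ᵥ x))
          - V₂ y ((Q₁ - Q₂)⁻¹ *ᵥ (S₂ᵀ *ᵥ y - S₁ᵀ *ᵥ x))
        = (1/2 : ℝ) * (x ⬝ᵥ (I₁₁ *ᵥ x)) + x ⬝ᵥ (I₁₂ *ᵥ y)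
            + (1/2 : ℝ) * (y ⬝ᵥ (I₂₂ *ᵥ y)) := by
  set A := Q₁ - Q₂ with hAdef
  have hA : A.IsSymm := hQ₁.sub hQ₂
  have hu : IsUnit A.det := Matrix.isUnit_iff_isUnit_det _ |>.1 hpd.isUnit
  have hAinv : A * A⁻¹ = 1 := Matrix.mul_nonsing_inv A hu
  have hAinv' : A⁻¹ * A = 1 := Matrix.nonsing_inv_mul A hu
  have hAsymm_inv : A⁻¹.IsSymm := by
    unfold Matrix.IsSymm
    rw [Matrix.transpose_nonsing_inv, hA]
  set b : Fin n → ℝ := S₂ᵀ *ᵥ y - S₁ᵀ *ᵥ x with hb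
  set zh : Fin n → ℝ := A⁻¹ *ᵥ b with hzh
  have hAzh : A *ᵥ zh = b := by
    rw [hzh, Matrix.mulVec_mulVec, hAinv, Matrix.one_mulVec]
  set C : ℝ := (1/2 : ℝ) * (x ⬝ᵥ (P₁ *ᵥ x)) - (1/2 : ℝ) * (y ⬝ᵥ (P₂ *ᵥ y)) with hC
  -- f z = C - b⬝z + ½ z⬝Az
  have key : ∀ z, V₁ x z - V₂ y z
      = C - b ⬝ᵥ z + (1/2 : ℝ) * (z ⬝ᵥ (A *ᵥ z)) := by
    intro z
    rw [hV₁, hV₂, hC, hb]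
    have h1 : x ⬝ᵥ (S₁ *ᵥ z) = (S₁ᵀ *ᵥ x) ⬝ᵥ z := transp_dot S₁ x z
    have h2 : y ⬝ᵥ (S₂ *ᵥ z) = (S₂ᵀ *ᵥ y) ⬝ᵥ z := transp_dot S₂ y z
    have h3 : z ⬝ᵥ (A *ᵥ z) = z ⬝ᵥ (Q₁ *ᵥ z) - z ⬝ᵥ (Q₂ *ᵥ z) := by
      rw [hAdef, Matrix.sub_mulVec, dotProduct_sub]
    rw [h1, h2, h3, sub_dotProduct]
    ring
  -- value at zh
  have hval : V₁ x zh - V₂ y zh = C - (1/2 : ℝ) * (b ⬝ᵥ (A⁻¹ *ᵥ b)) := by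
    rw [key zh]
    have h1 : zh ⬝ᵥ (A *ᵥ zh) = b ⬝ᵥ zh := by
      rw [hAzh, dotProduct_comm]
    rw [h1, hzh]
    ring
  -- RHS equals C - ½ b⬝A⁻¹b
  have hrhs : (1/2 : ℝ) * (x ⬝ᵥ (I₁₁ *ᵥ x)) + x ⬝ᵥ (I₁₂ *ᵥ y)
      + (1/2 : ℝ) * (y ⬝ᵥ (I₂₂ *ᵥ y)) = C - (1/2 : ℝ) * (b ⬝ᵥ (A⁻¹ *ᵥ b)) := by
    have e11 : x ⬝ᵥ (I₁₁ *ᵥ x)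
        = x ⬝ᵥ (P₁ *ᵥ x) - (S₁ᵀ *ᵥ x) ⬝ᵥ (A⁻¹ *ᵥ (S₁ᵀ *ᵥ x)) := by
      rw [hI₁₁, Matrix.sub_mulVec, dotProduct_sub, ← Matrix.mulVec_mulVec,
        ← Matrix.mulVec_mulVec, transp_dot S₁ x]
    have e12 : x ⬝ᵥ (I₁₂ *ᵥ y) = (S₁ᵀ *ᵥ x) ⬝ᵥ (A⁻¹ *ᵥ (S₂ᵀ *ᵥ y)) := by
      rw [hI₁₂, ← Matrix.mulVec_mulVec, ← Matrix.mulVec_mulVec, transp_dot S₁ x]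
    have e22 : y ⬝ᵥ (I₂₂ *ᵥ y)
        = -(y ⬝ᵥ (P₂ *ᵥ y)) - (S₂ᵀ *ᵥ y) ⬝ᵥ (A⁻¹ *ᵥ (S₂ᵀ *ᵥ y)) := by
      rw [hI₂₂, Matrix.sub_mulVec, dotProduct_sub, Matrix.neg_mulVec,
        dotProduct_neg, ← Matrix.mulVec_mulVec, ← Matrix.mulVec_mulVec,
        transp_dot S₂ y]
    have eb : b ⬝ᵥ (A⁻¹ *ᵥ b)
        = (S₂ᵀ *ᵥ y) ⬝ᵥ (A⁻¹ *ᵥ (S₂ᵀ *ᵥ y)) - 2 * ((S₁ᵀ *ᵥ x) ⬝ᵥ (A⁻¹ *ᵥ (S₂ᵀ *ᵥ y)))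
          + (S₁ᵀ *ᵥ x) ⬝ᵥ (A⁻¹ *ᵥ (S₁ᵀ *ᵥ x)) := by
      rw [hb, Matrix.mulVec_sub, sub_dotProduct, dotProduct_sub,
        dotProduct_sub,
        symm_dot_swap A⁻¹ hAsymm_inv (S₂ᵀ *ᵥ y) (S₁ᵀ *ᵥ x)]
      ring
    rw [e11, e12, e22, eb, hC]
    ring
  refine ⟨fun z => ?_, by rw [hval, hrhs]⟩
  rw [hrhs, key z]
  have hexp : (z - zh) ⬝ᵥ (A *ᵥ (z - zh))
      = z ⬝ᵥ (A *ᵥ z) - 2 * (b ⬝ᵥ z) + b ⬝ᵥ (A⁻¹ *ᵥ b) := by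
    rw [Matrix.mulVec_sub, sub_dotProduct, dotProduct_sub,
      dotProduct_sub, hAzh, symm_dot_swap A hA zh z, hAzh,
      dotProduct_comm b zh, hzh, dotProduct_comm z b]
    ring
  have hnn : 0 ≤ (z - zh) ⬝ᵥ (A *ᵥ (z - zh)) := by
    have := hpd.posSemidef.dotProduct_mulVec_nonneg (z - zh)
    simpa using this
  rw [hexp] at hnn
  linarith
end

section
/- Alternate (blow-up free) propagation identity: Let P₁, Q₁, P₂, Q₂, p₂ be symmetric n×n real matrices and S₁, S₂ arbitrary n×n real matrices. Assume Q₁ − Q₂ is invertible, p₂ − P₂ is invertible, and define I₁₁ = P₁ − S₁(Q₁ − Q₂)⁻¹S₁ᵀ, I₁₂ = S₁(Q₁ − Q₂)⁻¹S₂ᵀ, I₂₂ = −P₂ − S₂(Q₁ − Q₂)⁻¹S₂ᵀ. If additionally p₂ + I₂₂ is invertible and W := Q₁ − Q₂ − S₂ᵀ(p₂ − P₂)⁻¹S₂ is invertible, then I₁₁ − I₁₂(p₂ + I₂₂)⁻¹I₁₂ᵀ = P₁ − S₁W⁻¹S₁ᵀ. -/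
open scoped Matrix

/-- Alternate (blow-up free) propagation identity. With the max-plus
kernel matrices `I₁₁ = P₁ − S₁(Q₁−Q₂)⁻¹S₁ᵀ`, `I₁₂ = S₁(Q₁−Q₂)⁻¹S₂ᵀ`,
`I₂₂ = −P₂ − S₂(Q₁−Q₂)⁻¹S₂ᵀ`, and with the indicated matrices invertible,
`I₁₁ − I₁₂(p₂+I₂₂)⁻¹I₁₂ᵀ = P₁ − S₁(Q₁ − Q₂ − S₂ᵀ(p₂−P₂)⁻¹S₂)⁻¹S₁ᵀ`. -/
theorem alternate_propagation_identity (n : ℕ)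
    (P₁ Q₁ P₂ Q₂ p₂ S₁ S₂ : Matrix (Fin n) (Fin n) ℝ)
    (hP₁ : P₁.IsSymm) (hQ₁ : Q₁.IsSymm) (hP₂ : P₂.IsSymm) (hQ₂ : Q₂.IsSymm)
    (hp₂ : p₂.IsSymm)
    (hQinv : IsUnit (Q₁ - Q₂)) (hpPinv : IsUnit (p₂ - P₂))
    (I₁₁ I₁₂ I₂₂ : Matrix (Fin n) (Fin n) ℝ)
    (hI₁₁ : I₁₁ = P₁ - S₁ * (Q₁ - Q₂)⁻¹ * S₁ᵀ)
    (hI₁₂ : I₁₂ = S₁ * (Q₁ - Q₂)⁻¹ * S₂ᵀ)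
    (hI₂₂ : I₂₂ = -P₂ - S₂ * (Q₁ - Q₂)⁻¹ * S₂ᵀ)
    (hpIinv : IsUnit (p₂ + I₂₂))
    (W : Matrix (Fin n) (Fin n) ℝ)
    (hW : W = Q₁ - Q₂ - S₂ᵀ * (p₂ - P₂)⁻¹ * S₂)
    (hWinv : IsUnit W) :
    I₁₁ - I₁₂ * (p₂ + I₂₂)⁻¹ * I₁₂ᵀ = P₁ - S₁ * W⁻¹ * S₁ᵀ := by
  set M := (Q₁ - Q₂)⁻¹ with hM
  set A := p₂ - P₂ with hA
  have hMsymm : Mᵀ = M := by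
    rw [hM, Matrix.transpose_nonsing_inv]
    congr 1
    rw [Matrix.transpose_sub, hQ₁, hQ₂]
  have hAsymm : Aᵀ = A := by rw [hA, Matrix.transpose_sub, hp₂, hP₂]
  set K := A - S₂ * M * S₂ᵀ with hK
  have hKeq : p₂ + I₂₂ = K := by rw [hI₂₂, hK, hA]; abel
  have hKinv : IsUnit K := hKeq ▸ hpIinv
  -- basic unit facts
  have h1 : (Q₁ - Q₂) * M = 1 := Matrix.mul_nonsing_inv _
    ((Matrix.isUnit_iff_isUnit_det _).mp hQinv)
  have h2 : A⁻¹ * A = 1 := Matrix.nonsing_inv_mul _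
    ((Matrix.isUnit_iff_isUnit_det _).mp hpPinv)
  have h3 : K * K⁻¹ = 1 := Matrix.mul_nonsing_inv _
    ((Matrix.isUnit_iff_isUnit_det _).mp hKinv)
  -- the Woodbury computation: W * R = 1
  have hAK : A⁻¹ * (S₂ * M * S₂ᵀ) = 1 - A⁻¹ * K := by
    have : S₂ * M * S₂ᵀ = A - K := by rw [hK]; abel
    rw [this, Matrix.mul_sub, h2]
  have hWR : W * (M + M * S₂ᵀ * K⁻¹ * (S₂ * M)) = 1 := by
    have expand : W * (M + M * S₂ᵀ * K⁻¹ * (S₂ * M)) =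
        (Q₁ - Q₂) * M + ((Q₁ - Q₂) * M) * (S₂ᵀ * K⁻¹ * (S₂ * M))
          - S₂ᵀ * (A⁻¹ * (S₂ * M)) -
          S₂ᵀ * ((A⁻¹ * (S₂ * M * S₂ᵀ)) * (K⁻¹ * (S₂ * M))) := by
      rw [hW]
      noncomm_ring
    rw [expand, h1, hAK]
    have : S₂ᵀ * ((1 - A⁻¹ * K) * (K⁻¹ * (S₂ * M))) =
        S₂ᵀ * (K⁻¹ * (S₂ * M)) - S₂ᵀ * (A⁻¹ * ((K * K⁻¹) * (S₂ * M))) := by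
      noncomm_ring
    rw [this, h3]
    noncomm_ring
  have hWinvR : W⁻¹ = M + M * S₂ᵀ * K⁻¹ * (S₂ * M) :=
    Matrix.inv_eq_right_inv hWR
  have hI₁₂T : I₁₂ᵀ = S₂ * M * S₁ᵀ := by
    rw [hI₁₂, Matrix.transpose_mul, Matrix.transpose_mul, hMsymm,
      Matrix.transpose_transpose]
    noncomm_ring
  rw [hI₁₁, hI₁₂T, hI₁₂, hKeq, hWinvR]
  noncomm_ring
end

section
/- Kernel matching conditions and Hamiltonian similarity: Let A, Σ, C, Ā, Σ̄, C̄, P, S, Q be n×n real matrices with Σ, C, Σ̄, C̄, P, Q symmetric and S invertible. Define the 2n×2n block matrices K = [[S⁻¹P, −S⁻¹], [Sᵀ − QS⁻¹P, QS⁻¹]], H = [[A, Σ], [−C, −Aᵀ]], H̄ = [[Ā, Σ̄], [−C̄, −Āᵀ]]. Then (i) K is invertible with K⁻¹ = [[(S⁻¹)ᵀQ, (S⁻¹)ᵀ], [−S + P(S⁻¹)ᵀQ, P(S⁻¹)ᵀ]]; and (ii) the three matching conditions AᵀP + PA + C + PΣP = SΣ̄Sᵀ, (A + ΣP)ᵀS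 = S(−Ā + Σ̄Q), SᵀΣS = −ĀᵀQ − QĀ + C̄ + QΣ̄Q hold simultaneously if and only if KH = H̄K. -/
open scoped Matrix

/-- Kernel matching conditions and Hamiltonian similarity. With
`K = [[S⁻¹P, −S⁻¹], [Sᵀ − QS⁻¹P, QS⁻¹]]`, `H = [[A, Σ], [−C, −Aᵀ]]`,
`H̄ = [[Ā, Σ̄], [−C̄, −Āᵀ]]`: (i) `K` is invertible with the displayed inverse, and
(ii) the three matching conditions hold iff `KH = H̄K`. -/
theorem kernel_matching_conditions_hamiltonian (n : ℕ)
    (A Sig C Abar Sigbar Cbar P S Q : Matrix (Fin n) (Fin n) ℝ)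
    (hSig : Sig.IsSymm) (hC : C.IsSymm) (hSigbar : Sigbar.IsSymm) (hCbar : Cbar.IsSymm)
    (hP : P.IsSymm) (hQ : Q.IsSymm) (hS : IsUnit S)
    (K H Hbar Kinv : Matrix (Fin n ⊕ Fin n) (Fin n ⊕ Fin n) ℝ)
    (hK : K = Matrix.fromBlocks (S⁻¹ * P) (-S⁻¹) (Sᵀ - Q * S⁻¹ * P) (Q * S⁻¹))
    (hH : H = Matrix.fromBlocks A Sig (-C) (-Aᵀ))
    (hHbar : Hbar = Matrix.fromBlocks Abar Sigbar (-Cbar) (-Abarᵀ))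
    (hKinv : Kinv = Matrix.fromBlocks ((S⁻¹)ᵀ * Q) (S⁻¹)ᵀ
      (-S + P * (S⁻¹)ᵀ * Q) (P * (S⁻¹)ᵀ)) :
    (K * Kinv = 1 ∧ Kinv * K = 1) ∧
      ((Aᵀ * P + P * A + C + P * Sig * P = S * Sigbar * Sᵀ ∧
        (A + Sig * P)ᵀ * S = S * (-Abar + Sigbar * Q) ∧
        Sᵀ * Sig * S = -(Abarᵀ * Q) - Q * Abar + Cbar + Q * Sigbar * Q)
       ↔ K * H = Hbar * K) := by
  have hdet : IsUnit S.det := (Matrix.isUnit_iff_isUnit_det S).mp hS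
  have h1 : S * S⁻¹ = 1 := Matrix.mul_nonsing_inv S hdet
  have h2 : S⁻¹ * S = 1 := Matrix.nonsing_inv_mul S hdet
  have h3 : Sᵀ * (S⁻¹)ᵀ = 1 := by rw [← Matrix.transpose_mul, h2, Matrix.transpose_one]
  have h4 : (S⁻¹)ᵀ * Sᵀ = 1 := by rw [← Matrix.transpose_mul, h1, Matrix.transpose_one]
  have c1 : ∀ X : Matrix (Fin n) (Fin n) ℝ, S * (S⁻¹ * X) = X := fun X => by
    rw [← mul_assoc, h1, one_mul]
  have c2 : ∀ X : Matrix (Fin n) (Fin n) ℝ, S⁻¹ * (S * X) = X := fun X => by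
    rw [← mul_assoc, h2, one_mul]
  have c3 : ∀ X : Matrix (Fin n) (Fin n) ℝ, Sᵀ * ((S⁻¹)ᵀ * X) = X := fun X => by
    rw [← mul_assoc, h3, one_mul]
  have c4 : ∀ X : Matrix (Fin n) (Fin n) ℝ, (S⁻¹)ᵀ * (Sᵀ * X) = X := fun X => by
    rw [← mul_assoc, h4, one_mul]
  subst hK hH hHbar hKinv
  have hKi : (Matrix.fromBlocks (S⁻¹ * P) (-S⁻¹) (Sᵀ - Q * S⁻¹ * P) (Q * S⁻¹)) *
      (Matrix.fromBlocks ((S⁻¹)ᵀ * Q) (S⁻¹)ᵀ (-S + P * (S⁻¹)ᵀ * Q) (P * (S⁻¹)ᵀ)) = 1 := by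
    rw [Matrix.fromBlocks_multiply, ← Matrix.fromBlocks_one, Matrix.fromBlocks_inj]
    refine ⟨?_, ?_, ?_, ?_⟩ <;>
      simp only [mul_add, add_mul, mul_sub, sub_mul, neg_mul, mul_neg, neg_neg, mul_one,
        one_mul, mul_assoc, c1, c2, c3, c4, h1, h2, h3, h4] <;> abel
  have hKi' : (Matrix.fromBlocks ((S⁻¹)ᵀ * Q) (S⁻¹)ᵀ (-S + P * (S⁻¹)ᵀ * Q) (P * (S⁻¹)ᵀ)) *
      (Matrix.fromBlocks (S⁻¹ * P) (-S⁻¹) (Sᵀ - Q * S⁻¹ * P) (Q * S⁻¹)) = 1 := by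
    rw [Matrix.fromBlocks_multiply, ← Matrix.fromBlocks_one, Matrix.fromBlocks_inj]
    refine ⟨?_, ?_, ?_, ?_⟩ <;>
      simp only [mul_add, add_mul, mul_sub, sub_mul, neg_mul, mul_neg, neg_neg, mul_one,
        one_mul, mul_assoc, c1, c2, c3, c4, h1, h2, h3, h4] <;> abel
  refine ⟨⟨hKi, hKi'⟩, ?_, ?_⟩
  · rintro ⟨e1, e2, e3⟩
    have t : S⁻¹ * ((A + Sig * P)ᵀ * S) = -Abar + Sigbar * Q := by rw [e2, c2]
    have F_Abar : Abar = Sigbar * Q - S⁻¹ * ((A + Sig * P)ᵀ * S) := by rw [t]; abel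
    have F_Sigbar : Sigbar = S⁻¹ * (Aᵀ * P + P * A + C + P * Sig * P) * (S⁻¹)ᵀ := by
      rw [e1, Matrix.mul_assoc S, c2, mul_assoc, h3, mul_one]
    have F_Cbar : Cbar = Sᵀ * Sig * S + Abarᵀ * Q + Q * Abar - Q * Sigbar * Q := by
      rw [e3]; abel
    rw [Matrix.fromBlocks_multiply, Matrix.fromBlocks_multiply, Matrix.fromBlocks_inj]
    refine ⟨?_, ?_, ?_, ?_⟩ <;>
      simp only [F_Cbar, F_Abar, F_Sigbar, Matrix.transpose_add, Matrix.transpose_sub,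
        Matrix.transpose_neg, Matrix.transpose_mul, Matrix.transpose_transpose,
        hP.eq, hQ.eq, hSig.eq, hC.eq, mul_add, add_mul, mul_sub, sub_mul, neg_mul,
        mul_neg, neg_neg, mul_one, one_mul, mul_assoc, c1, c2, c3, c4, h1, h2, h3, h4] <;>
      abel
  · intro hcom
    have hH' : Matrix.fromBlocks Abar Sigbar (-Cbar) (-Abarᵀ) =
        ((Matrix.fromBlocks (S⁻¹ * P) (-S⁻¹) (Sᵀ - Q * S⁻¹ * P) (Q * S⁻¹)) *
          (Matrix.fromBlocks A Sig (-C) (-Aᵀ))) *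
        (Matrix.fromBlocks ((S⁻¹)ᵀ * Q) (S⁻¹)ᵀ (-S + P * (S⁻¹)ᵀ * Q) (P * (S⁻¹)ᵀ)) := by
      rw [hcom, mul_assoc, hKi, mul_one]
    rw [Matrix.fromBlocks_multiply, Matrix.fromBlocks_multiply, Matrix.fromBlocks_inj] at hH'
    obtain ⟨f11, f12, f21, f22⟩ := hH'
    have gC : Cbar = -(((Sᵀ - Q * S⁻¹ * P) * A + Q * S⁻¹ * -C) * ((S⁻¹)ᵀ * Q) +
        ((Sᵀ - Q * S⁻¹ * P) * Sig + Q * S⁻¹ * -Aᵀ) * (-S + P * (S⁻¹)ᵀ * Q)) := by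
      rw [← neg_neg Cbar, f21]
    refine ⟨?_, ?_, ?_⟩ <;>
      simp only [f11, f12, gC, Matrix.transpose_add, Matrix.transpose_sub,
        Matrix.transpose_neg, Matrix.transpose_mul, Matrix.transpose_transpose,
        hP.eq, hQ.eq, hSig.eq, hC.eq, mul_add, add_mul, mul_sub, sub_mul, neg_mul,
        mul_neg, neg_neg, mul_one, one_mul, mul_assoc, c1, c2, c3, c4, h1, h2, h3, h4] <;>
      abel
end

section
/- Radon / Davison–Maki representation: Let A, C, Σ : ℝ → (n×n real matrices), and let U, V : ℝ → (n×n real matrices) be differentiable on an interval I satisfying U'(t) = −A(t)U(t) − Σ(t)V(t) and V'(t) = C(t)U(t) + A(t)ᵀV(t), with U(t) invertible for every t ∈ I. Then p(t) := V(t)U(t)⁻¹ is differentiable on I and satisfies the differential Riccati equation p'(t) = A(t)ᵀp(t) + p(t)A(t) + C(t) + p(t)Σ(t)p(t) for all t ∈ I. -/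
open scoped Matrix

attribute [local instance] Matrix.normedAddCommGroup Matrix.normedSpace

section helpers
variable {n : ℕ} {I : Set ℝ} {t : ℝ}

noncomputable def DM.mulCLM (n : ℕ) :
    Matrix (Fin n) (Fin n) ℝ →L[ℝ] Matrix (Fin n) (Fin n) ℝ →L[ℝ] Matrix (Fin n) (Fin n) ℝ := by
  have e := (LinearMap.toContinuousLinearMap :
      (Matrix (Fin n) (Fin n) ℝ →ₗ[ℝ] Matrix (Fin n) (Fin n) ℝ) ≃ₗ[ℝ]
      (Matrix (Fin n) (Fin n) ℝ →L[ℝ] Matrix (Fin n) (Fin n) ℝ))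
  exact LinearMap.toContinuousLinearMap
    (e.toLinearMap.comp (LinearMap.mul ℝ (Matrix (Fin n) (Fin n) ℝ)))

theorem DM.hasDerivWithinAt_mul {f g : ℝ → Matrix (Fin n) (Fin n) ℝ}
    {f' g' : Matrix (Fin n) (Fin n) ℝ}
    (hf : HasDerivWithinAt f f' I t) (hg : HasDerivWithinAt g g' I t) :
    HasDerivWithinAt (fun s => f s * g s) (f' * g t + f t * g') I t := by
  have hfe : ∀ a b, HasDerivWithinAt (fun s => f s a b) (f' a b) I t := fun a b =>
    hasDerivWithinAt_pi.mp (hasDerivWithinAt_pi.mp hf a) b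
  have hge : ∀ a b, HasDerivWithinAt (fun s => g s a b) (g' a b) I t := fun a b =>
    hasDerivWithinAt_pi.mp (hasDerivWithinAt_pi.mp hg a) b
  refine hasDerivWithinAt_pi.mpr fun i => hasDerivWithinAt_pi.mpr fun j => ?_
  show HasDerivWithinAt (fun s => ∑ k, f s i k * g s k j)
    (∑ k, f' i k * g t k j + ∑ k, f t i k * g' k j) I t
  rw [← Finset.sum_add_distrib]
  exact HasDerivWithinAt.fun_sum fun k _ => (hfe i k).mul (hge k j)

theorem DM.diff_prod {ι : Type*} (u : Finset ι) (f : ι → ℝ → ℝ)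
    (h : ∀ i ∈ u, DifferentiableWithinAt ℝ (f i) I t) :
    DifferentiableWithinAt ℝ (fun s => ∏ i ∈ u, f i s) I t := by
  classical
  induction u using Finset.induction with
  | empty => simpa using differentiableWithinAt_const 1
  | insert a u' hx ih =>
    simp only [Finset.prod_insert hx]
    exact (h a (Finset.mem_insert_self a u')).mul
      (ih fun i hi => h i (Finset.mem_insert_of_mem hi))

theorem DM.diff_det {M : ℝ → Matrix (Fin n) (Fin n) ℝ}
    (h : ∀ i j, DifferentiableWithinAt ℝ (fun s => M s i j) I t) :
    DifferentiableWithinAt ℝ (fun s => (M s).det) I t := by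
  simp only [Matrix.det_apply']
  exact DifferentiableWithinAt.fun_sum fun σ _ =>
    ((DM.diff_prod Finset.univ _ fun i _ => h (σ i) i).const_mul _)

theorem DM.diff_inv {U : ℝ → Matrix (Fin n) (Fin n) ℝ}
    (hU : DifferentiableWithinAt ℝ U I t) (hdet : (U t).det ≠ 0) :
    DifferentiableWithinAt ℝ (fun s => (U s)⁻¹) I t := by
  have hent : ∀ i j, DifferentiableWithinAt ℝ (fun s => U s i j) I t := fun i j =>
    differentiableWithinAt_pi.mp (differentiableWithinAt_pi.mp hU i) j
  have hdd : DifferentiableWithinAt ℝ (fun s => (U s).det) I t := DM.diff_det hent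
  have hadj : ∀ i j, DifferentiableWithinAt ℝ (fun s => (U s).adjugate i j) I t := by
    intro i j
    simp only [Matrix.adjugate_apply]
    apply DM.diff_det
    intro k l
    simp only [Matrix.updateRow_apply]
    by_cases hk : k = j
    · subst hk
      simp only [if_pos rfl]
      exact differentiableWithinAt_const _
    · simpa [hk] using hent k l
  apply differentiableWithinAt_pi.mpr
  intro i
  apply differentiableWithinAt_pi.mpr
  intro j
  have : (fun s => (U s)⁻¹ i j) = fun s => ((U s).det)⁻¹ * (U s).adjugate i j := by
    funext s
    rw [Matrix.inv_def, Matrix.smul_apply, Ring.inverse_eq_inv', smul_eq_mul]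
  rw [this]
  exact (hdd.inv hdet).mul (hadj i j)

end helpers

/-- Radon / Davison–Maki representation. If `(U, V)` solves the linear
Hamiltonian system `U' = −AU − ΣV`, `V' = CU + AᵀV` on `I` with `U t` invertible, then
`p = V U⁻¹` solves the differential Riccati equation
`p' = Aᵀp + pA + C + pΣp` on `I`. -/
theorem davison_maki_representation (n : ℕ)
    (A C Sig : ℝ → Matrix (Fin n) (Fin n) ℝ)
    (U V : ℝ → Matrix (Fin n) (Fin n) ℝ) (I : Set ℝ)
    (hU : ∀ t ∈ I, HasDerivWithinAt U (-(A t * U t) - Sig t * V t) I t)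
    (hV : ∀ t ∈ I, HasDerivWithinAt V (C t * U t + (A t)ᵀ * V t) I t)
    (hUinv : ∀ t ∈ I, IsUnit (U t)) :
    ∀ t ∈ I, HasDerivWithinAt (fun s => V s * (U s)⁻¹)
      ((A t)ᵀ * (V t * (U t)⁻¹) + (V t * (U t)⁻¹) * A t + C t
        + (V t * (U t)⁻¹) * Sig t * (V t * (U t)⁻¹)) I t := by
  intro t ht
  set W : ℝ → Matrix (Fin n) (Fin n) ℝ := fun s => (U s)⁻¹ with hW
  set U' : Matrix (Fin n) (Fin n) ℝ := -(A t * U t) - Sig t * V t with hU'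
  have hdet : (U t).det ≠ 0 := by
    have := (Matrix.isUnit_iff_isUnit_det (U t)).mp (hUinv t ht)
    exact IsUnit.ne_zero this
  have hUWone : U t * W t = 1 := Matrix.mul_nonsing_inv _ (isUnit_iff_ne_zero.mpr hdet)
  have hWUone : W t * U t = 1 := Matrix.nonsing_inv_mul _ (isUnit_iff_ne_zero.mpr hdet)
  -- W is differentiable (some derivative F)
  have hWdiff : DifferentiableWithinAt ℝ W I t :=
    DM.diff_inv (hU t ht).differentiableWithinAt hdet
  obtain ⟨F, hF⟩ : ∃ F, HasDerivWithinAt W F I t :=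
    ⟨derivWithin W I t, hWdiff.hasDerivWithinAt⟩
  -- trick: on I, W s = W t - W s * ((U s - U t) * W t)
  have key : HasDerivWithinAt W (-(W t * (U' * W t))) I t := by
    have h1 : HasDerivWithinAt (fun s => U s - U t) U' I t := by
      exact (hU t ht).sub_const (U t)
    have h2 : HasDerivWithinAt (fun s => (U s - U t) * W t) (U' * W t) I t := by
      have := DM.hasDerivWithinAt_mul h1 (hasDerivWithinAt_const t I (W t))
      simpa using this
    have h3 : HasDerivWithinAt (fun s => W s * ((U s - U t) * W t))
        (F * ((U t - U t) * W t) + W t * (U' * W t)) I t :=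
      DM.hasDerivWithinAt_mul hF h2
    have h4 : HasDerivWithinAt (fun s => W t - W s * ((U s - U t) * W t))
        (-(W t * (U' * W t))) I t := by
      have := (hasDerivWithinAt_const t I (W t)).sub h3
      simpa using (show HasDerivWithinAt (fun s => W t - W s * ((U s - U t) * W t)) _ I t from this)
    apply h4.congr
    · intro s hs
      have hs1 : W s * U s = 1 :=
        Matrix.nonsing_inv_mul _ ((Matrix.isUnit_iff_isUnit_det (U s)).mp (hUinv s hs))
      calc W s = W s * (U t * W t) := by rw [hUWone, mul_one]
        _ = W t - W s * ((U s - U t) * W t) := by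
            rw [sub_mul, mul_sub, ← mul_assoc, ← mul_assoc, hs1, one_mul]
            abel
    · simp
  -- product rule for p = V * W
  have hp := DM.hasDerivWithinAt_mul (hV t ht) key
  convert hp using 1
  rw [hU']
  have h5 : -(W t * ((-(A t * U t) - Sig t * V t) * W t))
      = W t * (A t * (U t * W t)) + W t * (Sig t * (V t * W t)) := by noncomm_ring
  have h6 : (C t * U t + (A t)ᵀ * V t) * W t
      = C t * (U t * W t) + (A t)ᵀ * (V t * W t) := by noncomm_ring
  rw [h5, h6, hUWone, mul_one, mul_one]
  noncomm_ring
end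

section
/- Dual-space kernel formula: Let P₁, Q₁, P₂, Q₂ be symmetric n×n real matrices and S₁, S₂ arbitrary n×n real matrices, with P₁ − P₂ positive definite. Define φ₁(x, w) = ½xᵀP₁x + xᵀS₁w + ½wᵀQ₁w and φ₂(x, w) = ½xᵀP₂x + xᵀS₂w + ½wᵀQ₂w. Then for all y, z ∈ ℝⁿ, the infimum over x ∈ ℝⁿ of φ₁(x, y) − φ₂(x, z) equals ½zᵀB₁₁z + zᵀB₁₂y + ½yᵀB₂₂y, where B₁₁ = −S₂ᵀ(P₁ − P₂)⁻¹S₂ − Q₂, B₁₂ = S₂ᵀ(P₁ − P₂)⁻¹S₁, B₂₂ = −S₁ᵀ(P₁ − P₂)⁻¹S₁ + Q₁; the infimum is attained at x̂ = −(P₁ − P₂)⁻¹(S₁y − S₂z). -/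
open scoped Matrix

private lemma dot_tmul' {n : ℕ} (S M : Matrix (Fin n) (Fin n) ℝ) (a b : Fin n → ℝ) :
    a ⬝ᵥ ((Sᵀ * M) *ᵥ b) = (S *ᵥ a) ⬝ᵥ (M *ᵥ b) := by
  rw [← Matrix.mulVec_mulVec, Matrix.dotProduct_mulVec, Matrix.vecMul_transpose]

private lemma dot_symm' {n : ℕ} (M : Matrix (Fin n) (Fin n) ℝ) (hM : M.IsSymm)
    (a b : Fin n → ℝ) : a ⬝ᵥ (M *ᵥ b) = b ⬝ᵥ (M *ᵥ a) := by
  rw [Matrix.dotProduct_mulVec]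
  nth_rewrite 1 [← hM]
  rw [Matrix.vecMul_transpose, dotProduct_comm]

/-- Dual-space kernel formula. With `P₁ − P₂` positive definite,
`inf_x [φ₁(x,y) − φ₂(x,z)] = ½zᵀB₁₁z + zᵀB₁₂y + ½yᵀB₂₂y` where
`B₁₁ = −S₂ᵀ(P₁−P₂)⁻¹S₂ − Q₂`, `B₁₂ = S₂ᵀ(P₁−P₂)⁻¹S₁`,
`B₂₂ = −S₁ᵀ(P₁−P₂)⁻¹S₁ + Q₁`, attained at `x̂ = −(P₁−P₂)⁻¹(S₁y − S₂z)`. -/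
theorem dual_space_kernel_formula (n : ℕ)
    (P₁ Q₁ P₂ Q₂ S₁ S₂ : Matrix (Fin n) (Fin n) ℝ)
    (hP₁ : P₁.IsSymm) (hQ₁ : Q₁.IsSymm) (hP₂ : P₂.IsSymm) (hQ₂ : Q₂.IsSymm)
    (hpd : (P₁ - P₂).PosDef)
    (φ₁ φ₂ : (Fin n → ℝ) → (Fin n → ℝ) → ℝ)
    (hφ₁ : ∀ x w, φ₁ x w =
      (1/2 : ℝ) * (x ⬝ᵥ (P₁ *ᵥ x)) + x ⬝ᵥ (S₁ *ᵥ w) + (1/2 : ℝ) * (w ⬝ᵥ (Q₁ *ᵥ w)))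
    (hφ₂ : ∀ x w, φ₂ x w =
      (1/2 : ℝ) * (x ⬝ᵥ (P₂ *ᵥ x)) + x ⬝ᵥ (S₂ *ᵥ w) + (1/2 : ℝ) * (w ⬝ᵥ (Q₂ *ᵥ w)))
    (B₁₁ B₁₂ B₂₂ : Matrix (Fin n) (Fin n) ℝ)
    (hB₁₁ : B₁₁ = -(S₂ᵀ * (P₁ - P₂)⁻¹ * S₂) - Q₂)
    (hB₁₂ : B₁₂ = S₂ᵀ * (P₁ - P₂)⁻¹ * S₁)
    (hB₂₂ : B₂₂ = -(S₁ᵀ * (P₁ - P₂)⁻¹ * S₁) + Q₁)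
    (y z : Fin n → ℝ) :
    (∀ x : Fin n → ℝ,
        (1/2 : ℝ) * (z ⬝ᵥ (B₁₁ *ᵥ z)) + z ⬝ᵥ (B₁₂ *ᵥ y) + (1/2 : ℝ) * (y ⬝ᵥ (B₂₂ *ᵥ y))
          ≤ φ₁ x y - φ₂ x z) ∧
      φ₁ (-((P₁ - P₂)⁻¹ *ᵥ (S₁ *ᵥ y - S₂ *ᵥ z))) y
          - φ₂ (-((P₁ - P₂)⁻¹ *ᵥ (S₁ *ᵥ y - S₂ *ᵥ z))) z
        = (1/2 : ℝ) * (z ⬝ᵥ (B₁₁ *ᵥ z)) + z ⬝ᵥ (B₁₂ *ᵥ y)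
            + (1/2 : ℝ) * (y ⬝ᵥ (B₂₂ *ᵥ y)) := by
  set A := P₁ - P₂ with hAdef
  have hA : A.IsSymm := hP₁.sub hP₂
  have hdet : IsUnit A.det := (hpd.det_pos).ne'.isUnit
  have hInvSymm : (A⁻¹).IsSymm := by
    unfold Matrix.IsSymm
    rw [Matrix.transpose_nonsing_inv, hA]
  set u := S₁ *ᵥ y with hu
  set v := S₂ *ᵥ z with hv
  set b := A⁻¹ *ᵥ (u - v) with hb
  have hAb : A *ᵥ b = u - v := by
    rw [hb, Matrix.mulVec_mulVec, Matrix.mul_nonsing_inv _ hdet, Matrix.one_mulVec]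
  -- rewrite the B-terms
  have e11 : z ⬝ᵥ (B₁₁ *ᵥ z) = -(v ⬝ᵥ (A⁻¹ *ᵥ v)) - z ⬝ᵥ (Q₂ *ᵥ z) := by
    rw [hB₁₁]
    simp only [Matrix.sub_mulVec, Matrix.neg_mulVec, dotProduct_sub,
      dotProduct_neg]
    rw [Matrix.mul_assoc, dot_tmul', ← Matrix.mulVec_mulVec, ← hv]
  have e12 : z ⬝ᵥ (B₁₂ *ᵥ y) = v ⬝ᵥ (A⁻¹ *ᵥ u) := by
    rw [hB₁₂, Matrix.mul_assoc, dot_tmul', ← Matrix.mulVec_mulVec, ← hv, ← hu]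
  have e22 : y ⬝ᵥ (B₂₂ *ᵥ y) = -(u ⬝ᵥ (A⁻¹ *ᵥ u)) + y ⬝ᵥ (Q₁ *ᵥ y) := by
    rw [hB₂₂]
    simp only [Matrix.add_mulVec, Matrix.neg_mulVec, dotProduct_add,
      dotProduct_neg]
    rw [Matrix.mul_assoc, dot_tmul', ← Matrix.mulVec_mulVec, ← hu]
  have huv : u ⬝ᵥ (A⁻¹ *ᵥ v) = v ⬝ᵥ (A⁻¹ *ᵥ u) := dot_symm' _ hInvSymm u v
  -- value at the minimizer
  have hbdot : b ⬝ᵥ (A *ᵥ b) = u ⬝ᵥ (A⁻¹ *ᵥ u) - 2 * (v ⬝ᵥ (A⁻¹ *ᵥ u)) + v ⬝ᵥ (A⁻¹ *ᵥ v) := by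
    rw [hAb, hb, dotProduct_comm]
    simp only [Matrix.mulVec_sub, dotProduct_sub, sub_dotProduct]
    rw [huv]
    ring
  have hbu : b ⬝ᵥ u - b ⬝ᵥ v = b ⬝ᵥ (A *ᵥ b) := by
    rw [hAb]; simp [dotProduct_sub]
  -- difference identity for general x
  have hdiff : ∀ x : Fin n → ℝ, φ₁ x y - φ₂ x z =
      (1/2 : ℝ) * (x ⬝ᵥ (A *ᵥ x)) + x ⬝ᵥ u - x ⬝ᵥ v
        + (1/2 : ℝ) * (y ⬝ᵥ (Q₁ *ᵥ y)) - (1/2 : ℝ) * (z ⬝ᵥ (Q₂ *ᵥ z)) := by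
    intro x
    rw [hφ₁, hφ₂, hAdef]
    simp only [Matrix.sub_mulVec, dotProduct_sub, ← hu, ← hv]
    ring
  have hxAb : ∀ x : Fin n → ℝ, x ⬝ᵥ (A *ᵥ b) = b ⬝ᵥ (A *ᵥ x) := fun x => dot_symm' _ hA x b
  constructor
  · intro x
    have hpos : 0 ≤ (x + b) ⬝ᵥ (A *ᵥ (x + b)) := by
      have := hpd.posSemidef.dotProduct_mulVec_nonneg (x + b)
      simpa using this
    rw [hdiff x, e11, e12, e22]
    have hexp : (x + b) ⬝ᵥ (A *ᵥ (x + b)) =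
        x ⬝ᵥ (A *ᵥ x) + 2 * (x ⬝ᵥ (A *ᵥ b)) + b ⬝ᵥ (A *ᵥ b) := by
      simp only [Matrix.mulVec_add, dotProduct_add, add_dotProduct]
      rw [hxAb x]; ring
    have hxab : x ⬝ᵥ (A *ᵥ b) = x ⬝ᵥ u - x ⬝ᵥ v := by
      rw [hAb, dotProduct_sub]
    nlinarith [hpos, hexp, hbdot, hxab]
  · rw [hdiff _, e11, e12, e22]
    have hxhat : (-((P₁ - P₂)⁻¹ *ᵥ (S₁ *ᵥ y - S₂ *ᵥ z))) = -b := by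
      rw [hb, hu, hv]
    rw [hxhat]
    simp only [Matrix.mulVec_neg, dotProduct_neg, neg_dotProduct, neg_neg]
    nlinarith [hbdot, hbu]
end

section
/- Leipnik's analytical solution (constancy form): Let A, C, Σ be constant n×n real matrices with C and Σ symmetric. Let P₊ and P₋ be symmetric matrices solving the algebraic Riccati equation AᵀP + PA + C + PΣP = 0, with P₋ − P₊ invertible. Let r : ℝ → (n×n real matrices) be differentiable on an interval I containing 0 with r'(t) = Aᵀr(t) + r(t)A + C + r(t)Σr(t) and r(t) − P₊ invertible for all t ∈ I. Then the matrix-valued function t ↦ exp(t(A + ΣP₊)) · [ (r(t) − P₊)⁻¹ − (P₋ − P₊)⁻¹ ] · exp(t(A + ΣP₊)ᵀ) is constant on I; in particular for all t ∈ I, exp(t(A + ΣP₊))[(r(t) − P₊)⁻¹ − (P₋ − P₊)⁻¹]exp(t(A + ΣP₊)ᵀ) = (r(0) − P₊)⁻¹ − (P₋ − P₊)⁻¹. -/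
open scoped Matrix

set_option maxHeartbeats 1000000 in
/-- Auxiliary: constancy of `exp(t M₀) ((d t)⁻¹ - K) exp(t M₀ᵀ)` for `d` solving the
quadratic ODE `d' = M₀ᵀ d + d M₀ + d Σ d`, with `M₀ K + K M₀ᵀ + Σ = 0`. The derivative
hypothesis is stated in slope form to be independent of the choice of norm. -/
theorem leipnik_aux (n : ℕ) (Sig M₀ K : Matrix (Fin n) (Fin n) ℝ)
    (hK : M₀ * K + K * M₀ᵀ + Sig = 0)
    (d : ℝ → Matrix (Fin n) (Fin n) ℝ) (I : Set ℝ) (hI : Convex ℝ I) (h0 : (0 : ℝ) ∈ I)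
    (hd : ∀ t ∈ I, Filter.Tendsto (slope d t) (nhdsWithin t (I \ {t}))
        (nhds (M₀ᵀ * d t + d t * M₀ + d t * Sig * d t)))
    (hdinv : ∀ t ∈ I, IsUnit (d t)) :
    ∀ t ∈ I, NormedSpace.exp (t • M₀) * ((d t)⁻¹ - K) * NormedSpace.exp (t • M₀ᵀ)
      = (d 0)⁻¹ - K := by
  intro t ht
  letI : SeminormedRing (Matrix (Fin n) (Fin n) ℝ) := Matrix.linftyOpSemiNormedRing
  letI : NormedRing (Matrix (Fin n) (Fin n) ℝ) := Matrix.linftyOpNormedRing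
  letI : NormedAlgebra ℝ (Matrix (Fin n) (Fin n) ℝ) := Matrix.linftyOpNormedAlgebra
  have hd' : ∀ s ∈ I, HasDerivWithinAt d (M₀ᵀ * d s + d s * M₀ + d s * Sig * d s) I s := by
    intro s hs
    exact hasDerivWithinAt_iff_tendsto_slope.mpr (hd s hs)
  -- derivative of the inverse
  have hX : ∀ s ∈ I, HasDerivWithinAt (fun u => (d u)⁻¹)
      (-((d s)⁻¹ * M₀ᵀ + M₀ * (d s)⁻¹ + Sig)) I s := by
    intro s hs
    have hu := hdinv s hs
    have hXd : (d s)⁻¹ * d s = 1 :=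
      Matrix.nonsing_inv_mul _ ((Matrix.isUnit_iff_isUnit_det _).mp hu)
    have hdX : d s * (d s)⁻¹ = 1 :=
      Matrix.mul_nonsing_inv _ ((Matrix.isUnit_iff_isUnit_det _).mp hu)
    have hring : HasFDerivAt Ring.inverse
        (-(ContinuousLinearMap.mulLeftRight ℝ (Matrix (Fin n) (Fin n) ℝ)
            ↑hu.unit⁻¹ ↑hu.unit⁻¹)) (d s) := by
      have h := hasFDerivAt_ringInverse (𝕜 := ℝ) hu.unit
      rwa [hu.unit_spec] at h
    have hcomp : HasDerivWithinAt (fun u => Ring.inverse (d u))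
        (-(ContinuousLinearMap.mulLeftRight ℝ _ ↑hu.unit⁻¹ ↑hu.unit⁻¹
            (M₀ᵀ * d s + d s * M₀ + d s * Sig * d s))) I s := by
      have := hring.comp_hasDerivWithinAt s (hd' s hs)
      exact this
    have hinveq : (↑hu.unit⁻¹ : Matrix (Fin n) (Fin n) ℝ) = (d s)⁻¹ := by
      rw [Matrix.coe_units_inv, hu.unit_spec]
    have hval : -(ContinuousLinearMap.mulLeftRight ℝ _ ↑hu.unit⁻¹ ↑hu.unit⁻¹
          (M₀ᵀ * d s + d s * M₀ + d s * Sig * d s))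
        = -((d s)⁻¹ * M₀ᵀ + M₀ * (d s)⁻¹ + Sig) := by
      rw [ContinuousLinearMap.mulLeftRight_apply, hinveq]
      have expand : (d s)⁻¹ * (M₀ᵀ * d s + d s * M₀ + d s * Sig * d s) * (d s)⁻¹
          = (d s)⁻¹ * M₀ᵀ * (d s * (d s)⁻¹) + ((d s)⁻¹ * d s) * (M₀ * (d s)⁻¹)
            + ((d s)⁻¹ * d s) * Sig * (d s * (d s)⁻¹) := by noncomm_ring
      rw [expand, hXd, hdX]; noncomm_ring
    rw [hval] at hcomp
    have hfun : (fun u => Ring.inverse (d u)) = fun u => (d u)⁻¹ := by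
      funext u; rw [Matrix.nonsing_inv_eq_ringInverse]
    rwa [hfun] at hcomp
  -- the function F whose constancy we prove
  set F : ℝ → Matrix (Fin n) (Fin n) ℝ := fun u =>
    NormedSpace.exp (u • M₀) * ((d u)⁻¹ - K) * NormedSpace.exp (u • M₀ᵀ) with hF
  have hF0 : ∀ s ∈ I, HasDerivWithinAt F 0 I s := by
    intro s hs
    set E : Matrix (Fin n) (Fin n) ℝ := NormedSpace.exp (s • M₀) with hE
    set E' : Matrix (Fin n) (Fin n) ℝ := NormedSpace.exp (s • M₀ᵀ) with hE'
    have hEd : HasDerivAt (fun u : ℝ => NormedSpace.exp (u • M₀)) (M₀ * E) s :=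
      hasDerivAt_exp_smul_const' M₀ s
    have hE'd : HasDerivAt (fun u : ℝ => NormedSpace.exp (u • M₀ᵀ)) (M₀ᵀ * E') s :=
      hasDerivAt_exp_smul_const' M₀ᵀ s
    have h1 : HasDerivWithinAt (fun u => NormedSpace.exp (u • M₀) * ((d u)⁻¹ - K))
        (M₀ * E * ((d s)⁻¹ - K) + E * (-((d s)⁻¹ * M₀ᵀ + M₀ * (d s)⁻¹ + Sig))) I s :=
      hEd.hasDerivWithinAt.mul ((hX s hs).sub_const K)
    have h2 : HasDerivWithinAt F
        ((M₀ * E * ((d s)⁻¹ - K) + E * (-((d s)⁻¹ * M₀ᵀ + M₀ * (d s)⁻¹ + Sig))) * E'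
          + (E * ((d s)⁻¹ - K)) * (M₀ᵀ * E')) I s :=
      h1.mul hE'd.hasDerivWithinAt
    have hcE : M₀ * E = E * M₀ :=
      (((Commute.refl M₀).smul_right s).exp_right).eq
    have hzero : (M₀ * E * ((d s)⁻¹ - K) + E * (-((d s)⁻¹ * M₀ᵀ + M₀ * (d s)⁻¹ + Sig))) * E'
          + (E * ((d s)⁻¹ - K)) * (M₀ᵀ * E') = 0 := by
      have hb : M₀ * ((d s)⁻¹ - K) + (-((d s)⁻¹ * M₀ᵀ + M₀ * (d s)⁻¹ + Sig))
          + ((d s)⁻¹ - K) * M₀ᵀ = -(M₀ * K + K * M₀ᵀ + Sig) := by noncomm_ring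
      have hmain : (M₀ * E * ((d s)⁻¹ - K) + E * (-((d s)⁻¹ * M₀ᵀ + M₀ * (d s)⁻¹ + Sig))) * E'
          + (E * ((d s)⁻¹ - K)) * (M₀ᵀ * E')
          = E * (M₀ * ((d s)⁻¹ - K) + (-((d s)⁻¹ * M₀ᵀ + M₀ * (d s)⁻¹ + Sig))
              + ((d s)⁻¹ - K) * M₀ᵀ) * E' := by
        rw [hcE]; noncomm_ring
      rw [hmain, hb, hK, neg_zero, Matrix.mul_zero, Matrix.zero_mul]
    rwa [hzero] at h2
  -- constancy from zero derivative on a convex set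
  have hle := hI.norm_image_sub_le_of_norm_hasDerivWithin_le
    (f' := fun _ => (0 : Matrix (Fin n) (Fin n) ℝ)) (C := 0)
    (fun x hx => hF0 x hx) (fun x _ => by simp) h0 ht
  have hconst : F t = F 0 := by
    rw [zero_mul] at hle
    exact sub_eq_zero.mp (norm_le_zero_iff.mp hle)
  have hF0v : F 0 = (d 0)⁻¹ - K := by
    rw [hF]
    simp [NormedSpace.exp_zero]
  exact hconst.trans hF0v


open scoped Matrix

attribute [local instance] Matrix.normedAddCommGroup Matrix.normedSpace

set_option maxHeartbeats 1000000 in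
/-- Leipnik's analytical solution (constancy form). If `P₊, P₋` solve the
algebraic Riccati equation `AᵀP + PA + C + PΣP = 0` with `P₋ − P₊` invertible, and `r`
solves the forward DRE `r' = Aᵀr + rA + C + rΣr` on an interval `I ∋ 0` with `r t − P₊`
invertible, then `t ↦ exp(t(A+ΣP₊)) [(r t − P₊)⁻¹ − (P₋ − P₊)⁻¹] exp(t(A+ΣP₊)ᵀ)` is
constant on `I`, equal to its value `(r 0 − P₊)⁻¹ − (P₋ − P₊)⁻¹` at `0`. -/
theorem leipnik_analytic_solution (n : ℕ)
    (A C Sig : Matrix (Fin n) (Fin n) ℝ) (hC : C.IsSymm) (hSig : Sig.IsSymm)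
    (Pp Pm : Matrix (Fin n) (Fin n) ℝ) (hPp : Pp.IsSymm) (hPm : Pm.IsSymm)
    (hPpRic : Aᵀ * Pp + Pp * A + C + Pp * Sig * Pp = 0)
    (hPmRic : Aᵀ * Pm + Pm * A + C + Pm * Sig * Pm = 0)
    (hdiff : IsUnit (Pm - Pp))
    (r : ℝ → Matrix (Fin n) (Fin n) ℝ) (I : Set ℝ) (hI : Convex ℝ I) (h0 : (0 : ℝ) ∈ I)
    (hr : ∀ t ∈ I, HasDerivWithinAt r
      (Aᵀ * r t + r t * A + C + r t * Sig * r t) I t)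
    (hrinv : ∀ t ∈ I, IsUnit (r t - Pp)) :
    ∀ t ∈ I,
      NormedSpace.exp (t • (A + Sig * Pp))
          * ((r t - Pp)⁻¹ - (Pm - Pp)⁻¹)
          * NormedSpace.exp (t • (A + Sig * Pp)ᵀ)
        = (r 0 - Pp)⁻¹ - (Pm - Pp)⁻¹ := by
  have hM₀T : (A + Sig * Pp)ᵀ = Aᵀ + Pp * Sig := by
    rw [Matrix.transpose_add, Matrix.transpose_mul, hSig.eq, hPp.eq]
  have hCeq : C = -(Aᵀ * Pp + Pp * A + Pp * Sig * Pp) := by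
    have h : C + (Aᵀ * Pp + Pp * A + Pp * Sig * Pp) = 0 := by
      rw [← hPpRic]; abel
    exact eq_neg_of_add_eq_zero_left h
  have hD0 : (A + Sig * Pp)ᵀ * (Pm - Pp) + (Pm - Pp) * (A + Sig * Pp)
      + (Pm - Pp) * Sig * (Pm - Pp) = 0 := by
    have e : (A + Sig * Pp)ᵀ * (Pm - Pp) + (Pm - Pp) * (A + Sig * Pp)
        + (Pm - Pp) * Sig * (Pm - Pp)
        = (Aᵀ * Pm + Pm * A + C + Pm * Sig * Pm)
          - (Aᵀ * Pp + Pp * A + C + Pp * Sig * Pp) := by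
      rw [hM₀T]; noncomm_ring
    rw [e, hPmRic, hPpRic, sub_zero]
  have hKD : (Pm - Pp)⁻¹ * (Pm - Pp) = 1 :=
    Matrix.nonsing_inv_mul _ ((Matrix.isUnit_iff_isUnit_det _).mp hdiff)
  have hDK : (Pm - Pp) * (Pm - Pp)⁻¹ = 1 :=
    Matrix.mul_nonsing_inv _ ((Matrix.isUnit_iff_isUnit_det _).mp hdiff)
  have hK : (A + Sig * Pp) * (Pm - Pp)⁻¹ + (Pm - Pp)⁻¹ * (A + Sig * Pp)ᵀ + Sig = 0 := by
    have expand : (Pm - Pp)⁻¹ * ((A + Sig * Pp)ᵀ * (Pm - Pp) + (Pm - Pp) * (A + Sig * Pp)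
          + (Pm - Pp) * Sig * (Pm - Pp)) * (Pm - Pp)⁻¹
        = (Pm - Pp)⁻¹ * (A + Sig * Pp)ᵀ * ((Pm - Pp) * (Pm - Pp)⁻¹)
          + ((Pm - Pp)⁻¹ * (Pm - Pp)) * ((A + Sig * Pp) * (Pm - Pp)⁻¹)
          + ((Pm - Pp)⁻¹ * (Pm - Pp)) * Sig * ((Pm - Pp) * (Pm - Pp)⁻¹) := by noncomm_ring
    have e2 : (A + Sig * Pp) * (Pm - Pp)⁻¹ + (Pm - Pp)⁻¹ * (A + Sig * Pp)ᵀ + Sig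
        = (Pm - Pp)⁻¹ * ((A + Sig * Pp)ᵀ * (Pm - Pp) + (Pm - Pp) * (A + Sig * Pp)
            + (Pm - Pp) * Sig * (Pm - Pp)) * (Pm - Pp)⁻¹ := by
      rw [expand, hDK, hKD]; noncomm_ring
    rw [e2, hD0, Matrix.mul_zero, Matrix.zero_mul]
  have hdslope : ∀ t ∈ I, Filter.Tendsto (slope (fun s => r s - Pp) t)
      (nhdsWithin t (I \ {t}))
      (nhds ((A + Sig * Pp)ᵀ * (r t - Pp) + (r t - Pp) * (A + Sig * Pp)
        + (r t - Pp) * Sig * (r t - Pp))) := by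
    intro t ht
    have hval : Aᵀ * r t + r t * A + C + r t * Sig * r t
        = (A + Sig * Pp)ᵀ * (r t - Pp) + (r t - Pp) * (A + Sig * Pp)
          + (r t - Pp) * Sig * (r t - Pp) := by
      rw [hM₀T, hCeq]; noncomm_ring
    have h1 : HasDerivWithinAt (fun s => r s - Pp)
        ((A + Sig * Pp)ᵀ * (r t - Pp) + (r t - Pp) * (A + Sig * Pp)
          + (r t - Pp) * Sig * (r t - Pp)) I t := by
      rw [← hval]
      exact (hr t ht).sub_const Pp
    exact hasDerivWithinAt_iff_tendsto_slope.mp h1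
  exact leipnik_aux n Sig (A + Sig * Pp) (Pm - Pp)⁻¹ hK (fun s => r s - Pp) I hI h0
    hdslope hrinv
end

section
/- Rusnak's analytical solution: Let A, C, Σ be constant n×n real matrices with C and Σ symmetric. Let P be a symmetric matrix solving the algebraic Riccati equation AᵀP + PA + C + PΣP = 0, and set B = (A + ΣP)ᵀ. Let r : ℝ → (n×n real matrices) be differentiable on an interval I containing 0 with r'(t) = Aᵀr(t) + r(t)A + C + r(t)Σr(t) and r(t) − P invertible for all t ∈ I. Then for all t ∈ I, exp(tBᵀ)(r(t) − P)⁻¹exp(tB) = (r(0) − P)⁻¹ − ∫₀ᵗ exp(τBᵀ) Σ exp(τB) dτ. -/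
open scoped Matrix

section RusnakLinfWorld

attribute [local instance] Matrix.linftyOpNormedAddCommGroup Matrix.linftyOpNormedSpace
  Matrix.linftyOpNormedRing Matrix.linftyOpNormedAlgebra

/-- `HasDerivWithinAt` with the `L∞`-operator-norm instances on matrices. -/
def RusnakHD2 {n : ℕ} (f : ℝ → Matrix (Fin n) (Fin n) ℝ) (f' : Matrix (Fin n) (Fin n) ℝ)
    (s : Set ℝ) (x : ℝ) : Prop := HasDerivWithinAt f f' s x

lemma rusnakHD2_iff {n : ℕ} (f : ℝ → Matrix (Fin n) (Fin n) ℝ) (f' : Matrix (Fin n) (Fin n) ℝ)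
    (s : Set ℝ) (x : ℝ) :
    RusnakHD2 f f' s x ↔ Filter.Tendsto (slope f x) (nhdsWithin x (s \ {x})) (nhds f') :=
  hasDerivWithinAt_iff_tendsto_slope

lemma rusnak_aux_deriv {n : ℕ} (B Sig : Matrix (Fin n) (Fin n) ℝ)
    (Q : ℝ → Matrix (Fin n) (Fin n) ℝ) (I : Set ℝ) (t : ℝ)
    (hQ : RusnakHD2 Q (B * Q t + Q t * Bᵀ + Q t * Sig * Q t) I t)
    (hU : IsUnit (Q t)) :
    RusnakHD2
      (fun s => NormedSpace.exp (s • Bᵀ) * (Q s)⁻¹ * NormedSpace.exp (s • B))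
      (-(NormedSpace.exp (t • Bᵀ) * Sig * NormedSpace.exp (t • B))) I t := by
  unfold RusnakHD2 at hQ ⊢
  set Q' : Matrix (Fin n) (Fin n) ℝ := B * Q t + Q t * Bᵀ + Q t * Sig * Q t with hQ'def
  obtain ⟨u, hu⟩ := hU
  set W : Matrix (Fin n) (Fin n) ℝ := (Q t)⁻¹ with hWdef
  have hWu : W = Ring.inverse (Q t) := (Matrix.nonsing_inv_eq_ringInverse _)
  have hW1 : W * Q t = 1 := by
    rw [hWu, ← hu, Ring.inverse_unit]; exact u.inv_mul
  have hW2 : Q t * W = 1 := by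
    rw [hWu, ← hu, Ring.inverse_unit]; exact u.mul_inv
  have hinv : HasDerivWithinAt (fun s => (Q s)⁻¹) (-(W * Q' * W)) I t := by
    have h := ((hu ▸ hasFDerivAt_ringInverse (𝕜 := ℝ) u :
      HasFDerivAt _ _ (Q t))).comp_hasDerivWithinAt t hQ
    have hcoe : ((u⁻¹ : _ˣ) : Matrix (Fin n) (Fin n) ℝ) = W := by
      rw [hWu, ← hu, Ring.inverse_unit]
    simp only [ContinuousLinearMap.neg_apply, ContinuousLinearMap.mulLeftRight_apply,
      hcoe, hu] at h
    simp only [Function.comp_def, ← Matrix.nonsing_inv_eq_ringInverse] at h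
    exact h
  have h1 : HasDerivAt (fun s : ℝ => NormedSpace.exp (s • Bᵀ))
      (Bᵀ * NormedSpace.exp (t • Bᵀ)) t := hasDerivAt_exp_smul_const' _ _
  have h3 : HasDerivAt (fun s : ℝ => NormedSpace.exp (s • B))
      (B * NormedSpace.exp (t • B)) t := hasDerivAt_exp_smul_const' _ _
  have h := ((h1.hasDerivWithinAt.mul hinv).mul h3.hasDerivWithinAt)
  refine h.congr_deriv (Eq.symm ?_)
  set E1 := NormedSpace.exp (t • Bᵀ)
  set E2 := NormedSpace.exp (t • B)
  have cB : Bᵀ * E1 = E1 * Bᵀ := (((Commute.refl Bᵀ).smul_right t).exp_right).eq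
  have key : Bᵀ * W + -(W * Q' * W) + W * B = -Sig := by
    have expand : W * Q' * W
        = W * B * (Q t * W) + (W * Q t) * (Bᵀ * W) + (W * Q t) * Sig * (Q t * W) := by
      rw [hQ'def]; noncomm_ring
    rw [hW1, hW2] at expand
    simp only [one_mul, mul_one] at expand
    rw [expand]; abel
  calc -(E1 * Sig * E2) = E1 * (-Sig) * E2 := by noncomm_ring
    _ = E1 * (Bᵀ * W + -(W * Q' * W) + W * B) * E2 := by rw [key]
    _ = (Bᵀ * E1 * W + E1 * -(W * Q' * W)) * E2 + E1 * W * (B * E2) := by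
        rw [cB]; noncomm_ring

lemma rusnak_aux_cont {n : ℕ} (B Sig : Matrix (Fin n) (Fin n) ℝ) :
    Continuous (fun s : ℝ =>
      -(NormedSpace.exp (s • Bᵀ) * Sig * NormedSpace.exp (s • B))) := by
  have h1 : Continuous (fun s : ℝ => NormedSpace.exp (s • Bᵀ)) :=
    NormedSpace.exp_continuous.comp (continuous_id.smul continuous_const)
  have h2 : Continuous (fun s : ℝ => NormedSpace.exp (s • B)) :=
    NormedSpace.exp_continuous.comp (continuous_id.smul continuous_const)
  exact ((h1.mul continuous_const).mul h2).neg

end RusnakLinfWorld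

section RusnakPinWorld

attribute [local instance] Matrix.normedAddCommGroup Matrix.normedSpace

/-- `HasDerivWithinAt` with the elementwise sup-norm instances on matrices. -/
def RusnakHD1 {n : ℕ} (f : ℝ → Matrix (Fin n) (Fin n) ℝ) (f' : Matrix (Fin n) (Fin n) ℝ)
    (s : Set ℝ) (x : ℝ) : Prop := HasDerivWithinAt f f' s x

lemma rusnakHD1_iff {n : ℕ} (f : ℝ → Matrix (Fin n) (Fin n) ℝ) (f' : Matrix (Fin n) (Fin n) ℝ)
    (s : Set ℝ) (x : ℝ) :
    RusnakHD1 f f' s x ↔ Filter.Tendsto (slope f x) (nhdsWithin x (s \ {x})) (nhds f') :=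
  hasDerivWithinAt_iff_tendsto_slope

end RusnakPinWorld

lemma rusnak_transfer {n : ℕ} (f : ℝ → Matrix (Fin n) (Fin n) ℝ) (f' : Matrix (Fin n) (Fin n) ℝ)
    (s : Set ℝ) (x : ℝ) : RusnakHD1 f f' s x ↔ RusnakHD2 f f' s x := by
  rw [rusnakHD1_iff, rusnakHD2_iff]

attribute [local instance] Matrix.normedAddCommGroup Matrix.normedSpace

/-- Rusnak's analytical solution. If `P` solves the algebraic Riccati
equation `AᵀP + PA + C + PΣP = 0`, `B = (A + ΣP)ᵀ`, and `r` solves the forward DRE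
`r' = Aᵀr + rA + C + rΣr` on an interval `I ∋ 0` with `r t − P` invertible, then for all
`t ∈ I`, `exp(tBᵀ)(r t − P)⁻¹exp(tB) = (r 0 − P)⁻¹ − ∫₀ᵗ exp(τBᵀ) Σ exp(τB) dτ`. -/
theorem rusnak_analytic_solution (n : ℕ)
    (A C Sig : Matrix (Fin n) (Fin n) ℝ) (hC : C.IsSymm) (hSig : Sig.IsSymm)
    (P : Matrix (Fin n) (Fin n) ℝ) (hP : P.IsSymm)
    (hPRic : Aᵀ * P + P * A + C + P * Sig * P = 0)
    (B : Matrix (Fin n) (Fin n) ℝ) (hB : B = (A + Sig * P)ᵀ)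
    (r : ℝ → Matrix (Fin n) (Fin n) ℝ) (I : Set ℝ) (hI : Convex ℝ I) (h0 : (0 : ℝ) ∈ I)
    (hr : ∀ t ∈ I, HasDerivWithinAt r
      (Aᵀ * r t + r t * A + C + r t * Sig * r t) I t)
    (hrinv : ∀ t ∈ I, IsUnit (r t - P)) :
    ∀ t ∈ I,
      NormedSpace.exp (t • Bᵀ) * (r t - P)⁻¹ * NormedSpace.exp (t • B)
        = (r 0 - P)⁻¹
            - ∫ τ in (0 : ℝ)..t,
                NormedSpace.exp (τ • Bᵀ) * Sig * NormedSpace.exp (τ • B) := by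
  intro t ht
  set Q : ℝ → Matrix (Fin n) (Fin n) ℝ := fun s => r s - P with hQdef
  set g : ℝ → Matrix (Fin n) (Fin n) ℝ :=
    fun s => NormedSpace.exp (s • Bᵀ) * (Q s)⁻¹ * NormedSpace.exp (s • B) with hgdef
  set g' : ℝ → Matrix (Fin n) (Fin n) ℝ :=
    fun s => -(NormedSpace.exp (s • Bᵀ) * Sig * NormedSpace.exp (s • B)) with hg'def
  -- algebraic identity for the derivative of Q
  have key : ∀ X : Matrix (Fin n) (Fin n) ℝ,
      B * (X - P) + (X - P) * Bᵀ + (X - P) * Sig * (X - P)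
        = Aᵀ * X + X * A + C + X * Sig * X := by
    intro X
    have hBe : B = Aᵀ + P * Sig := by
      rw [hB, Matrix.transpose_add, Matrix.transpose_mul, hP, hSig]
    have hBt : Bᵀ = A + Sig * P := by rw [hB, Matrix.transpose_transpose]
    have hCe : C = -(Aᵀ * P) - P * A - P * Sig * P := by
      rw [← sub_eq_zero, ← hPRic]; abel
    rw [hBt, hBe, hCe]; noncomm_ring
  have hQderiv : ∀ s ∈ I, HasDerivWithinAt Q (B * Q s + Q s * Bᵀ + Q s * Sig * Q s) I s := by
    intro s hs
    have h := (hr s hs).sub_const P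
    have := key (r s)
    simp only [hQdef]
    rw [this]
    exact h
  -- derivative of g, via the transfer to the L∞ operator norm world
  have hgderiv : ∀ s ∈ I, HasDerivWithinAt g (g' s) I s := by
    intro s hs
    have h1 : RusnakHD1 Q (B * Q s + Q s * Bᵀ + Q s * Sig * Q s) I s := hQderiv s hs
    have h2 := (rusnak_transfer _ _ _ _).mp h1
    have h3 := rusnak_aux_deriv B Sig Q I s h2 (hrinv s hs)
    exact (rusnak_transfer _ _ _ _).mpr h3
  -- continuity of g'
  have hcontg' : Continuous g' := rusnak_aux_cont B Sig
  -- the interval lies inside I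
  have huIccI : Set.uIcc (0 : ℝ) t ⊆ I := hI.ordConnected.uIcc_subset h0 ht
  -- FTC
  have hFTC : ∫ x in (0 : ℝ)..t, g' x = g t - g 0 := by
    apply intervalIntegral.integral_eq_sub_of_hasDeriv_right
    · intro x hx
      exact ((hgderiv x (huIccI hx)).mono huIccI).continuousWithinAt
    · intro x hx
      have hxI : x ∈ I := huIccI (Set.Ioo_subset_Icc_self hx)
      have hmem : I ∈ nhdsWithin x (Set.Ioi x) := by
        refine Filter.mem_of_superset (Ioc_mem_nhdsGT_of_mem ⟨le_refl x, hx.2⟩) ?_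
        intro y hy
        exact huIccI ⟨le_trans hx.1.le hy.1.le, hy.2⟩
      exact (hgderiv x hxI).mono_of_mem_nhdsWithin hmem
    · exact hcontg'.intervalIntegrable _ _
  have hg0 : g 0 = (r 0 - P)⁻¹ := by
    simp [hgdef, hQdef, NormedSpace.exp_zero]
  have hneg : ∫ x in (0 : ℝ)..t, g' x
      = -∫ τ in (0 : ℝ)..t,
          NormedSpace.exp (τ • Bᵀ) * Sig * NormedSpace.exp (τ • B) := by
    rw [hg'def]
    exact intervalIntegral.integral_neg
  have h5 : -(∫ τ in (0 : ℝ)..t,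
      NormedSpace.exp (τ • Bᵀ) * Sig * NormedSpace.exp (τ • B)) = g t - g 0 := by
    rw [← hneg]; exact hFTC
  have h6 := neg_eq_iff_eq_neg.mp h5
  have : g t = g 0 - ∫ τ in (0 : ℝ)..t,
      NormedSpace.exp (τ • Bᵀ) * Sig * NormedSpace.exp (τ • B) := by
    rw [h6]; abel
  rw [hg0] at this
  exact this
end

section
/- Duality of algebraic Riccati equation solutions: Let A, Σ, C, Ā, Σ̄, C̄, P, S, Q be n×n real matrices with Σ, C, Σ̄, C̄, P, Q symmetric and S invertible, satisfying the time-invariant matching conditions AᵀP + PA + C + PΣP = SΣ̄Sᵀ, (A + ΣP)ᵀS = S(−Ā + Σ̄Q), and SᵀΣS = −ĀᵀQ − QĀ + C̄ + QΣ̄Q. Suppose p̂ is a symmetric n×n matrix with Aᵀp̂ + p̂A + C + p̂Σp̂ = 0 and p̂ − P invertible. Then q̂ := −Sᵀ(p̂ − P)⁻¹S − Q satisfies the dual algebraic Riccati equation Āᵀq̂ + q̂Ā + C̄ + q̂Σ̄q̂ = 0. -/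
open scoped Matrix

/-- Duality of algebraic Riccati equation solutions. Under the
time-invariant kernel matching conditions for `(A, C, Σ)`, `(P, S, Q)` and
`(Ā, C̄, Σ̄)`, if `p̂` solves the primal algebraic Riccati equation with `p̂ − P`
invertible, then `q̂ = −Sᵀ(p̂−P)⁻¹S − Q` solves the dual algebraic Riccati equation. -/
theorem duality_of_ARE_solutions (n : ℕ)
    (A Sig C Abar Sigbar Cbar P S Q : Matrix (Fin n) (Fin n) ℝ)
    (hSig : Sig.IsSymm) (hC : C.IsSymm) (hSigbar : Sigbar.IsSymm) (hCbar : Cbar.IsSymm)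
    (hP : P.IsSymm) (hQ : Q.IsSymm) (hS : IsUnit S)
    (hmatch1 : Aᵀ * P + P * A + C + P * Sig * P = S * Sigbar * Sᵀ)
    (hmatch2 : (A + Sig * P)ᵀ * S = S * (-Abar + Sigbar * Q))
    (hmatch3 : Sᵀ * Sig * S = -(Abarᵀ * Q) - Q * Abar + Cbar + Q * Sigbar * Q)
    (phat : Matrix (Fin n) (Fin n) ℝ) (hphat : phat.IsSymm)
    (hphatRic : Aᵀ * phat + phat * A + C + phat * Sig * phat = 0)
    (hinv : IsUnit (phat - P))
    (qhat : Matrix (Fin n) (Fin n) ℝ)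
    (hqhat : qhat = -(Sᵀ * (phat - P)⁻¹ * S) - Q) :
    Abarᵀ * qhat + qhat * Abar + Cbar + qhat * Sigbar * qhat = 0 := by
  set R := phat - P with hR
  set N := R⁻¹ with hN
  have hd : IsUnit R.det := (Matrix.isUnit_iff_isUnit_det _).mp hinv
  have h1 : R * N = 1 := Matrix.mul_nonsing_inv _ hd
  have h2 : N * R = 1 := Matrix.nonsing_inv_mul _ hd
  set X := A + Sig * P with hX
  have hXT : Xᵀ = Aᵀ + P * Sig := by
    rw [hX, Matrix.transpose_add, Matrix.transpose_mul, hSig, hP]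
  -- key identity from the two Riccati/matching equations
  have hE : Xᵀ * R + R * X + R * Sig * R + S * Sigbar * Sᵀ = 0 := by
    have h : Xᵀ * R + R * X + R * Sig * R + S * Sigbar * Sᵀ
        = (Aᵀ * phat + phat * A + C + phat * Sig * phat)
          - (Aᵀ * P + P * A + C + P * Sig * P) + S * Sigbar * Sᵀ := by
      rw [hXT, hX, hR]; noncomm_ring
    rw [h, hphatRic, hmatch1]; noncomm_ring
  -- transpose of hmatch2
  have hmatch2' : Sᵀ * X = -(Abarᵀ * Sᵀ) + Q * Sigbar * Sᵀ := by
    simpa [Matrix.transpose_mul, Matrix.transpose_add, Matrix.transpose_neg,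
      hSigbar.eq, hQ.eq, Matrix.mul_add, Matrix.add_mul] using
      congrArg Matrix.transpose hmatch2
  set M := Sᵀ * N * S with hM
  have e1 : Sᵀ * N * (Xᵀ * (R * (N * S))) = M * (-Abar + Sigbar * Q) := by
    rw [show R * (N * S) = S from by rw [← mul_assoc, h1, one_mul], hmatch2, hM]
    noncomm_ring
  have e2 : Sᵀ * (N * (R * (X * (N * S)))) = (-(Abarᵀ * Sᵀ) + Q * Sigbar * Sᵀ) * (N * S) := by
    rw [show N * (R * (X * (N * S))) = X * (N * S) from by rw [← mul_assoc, h2, one_mul],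
      ← mul_assoc, hmatch2']
  have e3 : Sᵀ * (N * (R * (Sig * (R * (N * S)))))
      = -(Abarᵀ * Q) - Q * Abar + Cbar + Q * Sigbar * Q := by
    rw [show R * (N * S) = S from by rw [← mul_assoc, h1, one_mul],
      show N * (R * (Sig * S)) = Sig * S from by rw [← mul_assoc, h2, one_mul],
      ← mul_assoc]
    exact hmatch3
  have hsum : Sᵀ * N * (Xᵀ * (R * (N * S))) + Sᵀ * (N * (R * (X * (N * S))))
      + Sᵀ * (N * (R * (Sig * (R * (N * S))))) + M * Sigbar * M = 0 := by
    have h : Sᵀ * N * (Xᵀ * (R * (N * S))) + Sᵀ * (N * (R * (X * (N * S))))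
        + Sᵀ * (N * (R * (Sig * (R * (N * S))))) + M * Sigbar * M
        = Sᵀ * N * (Xᵀ * R + R * X + R * Sig * R + S * Sigbar * Sᵀ) * (N * S) := by
      rw [hM]; noncomm_ring
    rw [h, hE]; simp
  rw [e1, e2, e3] at hsum
  rw [hqhat]
  calc Abarᵀ * (-M - Q) + (-M - Q) * Abar + Cbar + (-M - Q) * Sigbar * (-M - Q)
      = M * (-Abar + Sigbar * Q) + (-(Abarᵀ * Sᵀ) + Q * Sigbar * Sᵀ) * (N * S)
        + (-(Abarᵀ * Q) - Q * Abar + Cbar + Q * Sigbar * Q) + M * Sigbar * M := by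
        rw [hM]; noncomm_ring
    _ = 0 := hsum
end
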